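/- Let Φ be an irreducible reduced root system and β a positive long root. Then the length of the reflection s_β in the Weyl group satisfies l(s_β) = 2·ht^∨(β) − 1, where ht^∨(β) is the height of the coroot β^∨. -/

import Mathlib

open scoped RealInnerProductSpace

variable {V : Type*} [NormedAddCommGroup V] [InnerProductSpace ℝ V]

/-- An irreducible reduced (crystallographic) root system in a real inner product space. -/
structure IsIrredRootSystem (Φ : Set V) : Prop where
  finite : Φ.Finite
  nonempty : Φ.Nonempty
  nonzero : (0 : V) ∉ Φ
  spanning : Submodule.span ℝ Φ = ⊤
  reflect_mem : ∀ α ∈ Φ, ∀ β ∈ Φ, β - (2 * ⟪α, β⟫ / ⟪α, α⟫) • α ∈ Φ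
  crystallographic : ∀ α ∈ Φ, ∀ β ∈ Φ, ∃ n : ℤ, 2 * ⟪α, β⟫ / ⟪α, α⟫ = (n : ℝ)
  reduced : ∀ α ∈ Φ, ∀ t : ℝ, t • α ∈ Φ → t = 1 ∨ t = -1
  irreducible : ∀ Φ₁ Φ₂ : Set V, Φ₁ ∪ Φ₂ = Φ →
    (∀ α ∈ Φ₁, ∀ β ∈ Φ₂, ⟪α, β⟫ = 0) → Φ₁ = ∅ ∨ Φ₂ = ∅

/-- `Δ` is a base (system of simple roots) for `Φ`: it is contained in `Φ`, linearly
independent, and every root is an integral combination of `Δ` with coefficients all of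
the same sign. -/
def IsBase (Φ : Set V) (Δ : Finset V) : Prop :=
  (Δ : Set V) ⊆ Φ ∧ LinearIndependent ℝ (fun a : Δ => (a : V)) ∧
    ∀ γ ∈ Φ, ∃ c : V → ℤ, γ = ∑ α ∈ Δ, (c α : ℝ) • α ∧
      ((∀ α ∈ Δ, 0 ≤ c α) ∨ (∀ α ∈ Δ, c α ≤ 0))

/-- The positive roots with respect to the base `Δ`. -/
def posRoots (Φ : Set V) (Δ : Finset V) : Set V :=
  {γ ∈ Φ | ∃ c : V → ℕ, γ = ∑ α ∈ Δ, (c α : ℝ) • α}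

/-- The coroot `γ^∨ = 2γ/(γ|γ)` of a root `γ`. -/
noncomputable def coroot (γ : V) : V := (2 / ⟪γ, γ⟫) • γ

/-- The set of reflections in the roots of `Φ`, as linear automorphisms of `V`. -/
def reflections (Φ : Set V) : Set (V ≃ₗ[ℝ] V) :=
  {w | ∃ α ∈ Φ, ∀ v, w v = v - (2 * ⟪α, v⟫ / ⟪α, α⟫) • α}

/-- The Weyl group of `Φ`: the group generated by the reflections in the roots. -/
def weylGroup (Φ : Set V) : Subgroup (V ≃ₗ[ℝ] V) := Subgroup.closure (reflections Φ)

/-- The simple reflections with respect to the base `Δ`. -/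
def simpleReflections (Δ : Finset V) : Set (V ≃ₗ[ℝ] V) :=
  {w | ∃ α ∈ Δ, ∀ v, w v = v - (2 * ⟪α, v⟫ / ⟪α, α⟫) • α}

/-- The length of `w` with respect to the simple reflections determined by `Δ`. -/
noncomputable def len (Δ : Finset V) (w : V ≃ₗ[ℝ] V) : ℕ :=
  sInf {n | ∃ L : List (V ≃ₗ[ℝ] V),
    (∀ s ∈ L, s ∈ simpleReflections Δ) ∧ L.length = n ∧ L.prod = w}

/-- `t` is the highest root of `Φ` with respect to the base `Δ`. -/
def IsHighestRoot (Φ : Set V) (Δ : Finset V) (t : V) : Prop :=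
  t ∈ Φ ∧ ∀ α ∈ Φ, ∃ c : V → ℕ, t - α = ∑ a ∈ Δ, (c a : ℝ) • a




lemma inner_self_pos' {x : V} (h : x ≠ 0) : 0 < ⟪x, x⟫ :=
  lt_of_le_of_ne real_inner_self_nonneg (Ne.symm (fun h0 => h (inner_self_eq_zero.1 h0)))

noncomputable def reflLM (α : V) : V →ₗ[ℝ] V where
  toFun v := v - (2 * ⟪α, v⟫ / ⟪α, α⟫) • α
  map_add' u v := by
    simp only [inner_add_right]
    rw [mul_add, add_div, add_smul]
    abel
  map_smul' t v := by
    simp only [inner_smul_right, RingHom.id_apply, smul_sub, smul_smul]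
    ring_nf

example (α u : V) : reflLM α u = u - (2 * ⟪α, u⟫ / ⟪α, α⟫) • α := rfl

lemma reflLM_invol (α : V) : Function.Involutive (reflLM α) := by
  intro v
  by_cases h : (α : V) = 0
  · simp [reflLM, h]
  · have hα : ⟪α, α⟫ ≠ 0 := by
      simpa using (inner_self_pos' h).ne'
    show reflLM α (v - (2 * ⟪α, v⟫ / ⟪α, α⟫) • α) = v
    show (v - (2 * ⟪α, v⟫ / ⟪α, α⟫) • α) -
      (2 * ⟪α, v - (2 * ⟪α, v⟫ / ⟪α, α⟫) • α⟫ / ⟪α, α⟫) • α = v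
    rw [inner_sub_right, real_inner_smul_right]
    rw [show 2 * ⟪α, v⟫ / ⟪α, α⟫ * ⟪α, α⟫ = 2 * ⟪α, v⟫ by field_simp]
    rw [show ⟪α, v⟫ - 2 * ⟪α, v⟫ = -⟪α, v⟫ by ring]
    rw [show 2 * -⟪α, v⟫ / ⟪α, α⟫ = -(2 * ⟪α, v⟫ / ⟪α, α⟫) by ring]
    rw [neg_smul]
    abel

noncomputable def sRefl (α : V) : V ≃ₗ[ℝ] V := LinearEquiv.ofInvolutive (reflLM α) (reflLM_invol α)

lemma sRefl_apply (α v : V) : sRefl α v = v - (2 * ⟪α, v⟫ / ⟪α, α⟫) • α := rfl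

lemma sRefl_sRefl (α v : V) : sRefl α (sRefl α v) = v := reflLM_invol α v

lemma mul_apply' (e f : V ≃ₗ[ℝ] V) (v : V) : (e * f) v = e (f v) := rfl
lemma one_apply' (v : V) : (1 : V ≃ₗ[ℝ] V) v = v := rfl

lemma sRefl_mul_self (α : V) : sRefl α * sRefl α = 1 :=
  LinearEquiv.toLinearMap_injective (LinearMap.ext fun v => sRefl_sRefl α v)

lemma sRefl_inv (α : V) : (sRefl α)⁻¹ = sRefl α :=
  inv_eq_of_mul_eq_one_right (sRefl_mul_self α)

lemma sRefl_self (α : V) (h : α ≠ 0) : sRefl α α = -α := by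
  have hα : ⟪α, α⟫ ≠ 0 := by simpa using (inner_self_pos' h).ne'
  rw [sRefl_apply, show 2 * ⟪α, α⟫ / ⟪α, α⟫ = 2 by field_simp]
  rw [two_smul]; abel

lemma sRefl_inner (α u v : V) : ⟪sRefl α u, sRefl α v⟫ = ⟪u, v⟫ := by
  by_cases h : (α : V) = 0
  · simp [sRefl_apply, h]
  · have hα : ⟪α, α⟫ ≠ 0 := by simpa using (inner_self_pos' h).ne'
    rw [sRefl_apply, sRefl_apply, inner_sub_left, inner_sub_right, inner_sub_right,
      real_inner_smul_left, real_inner_smul_left, real_inner_smul_right, real_inner_smul_right,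
      real_inner_comm α u]
    field_simp
    ring


section Aux2
variable {Φ : Set V} {Δ : Finset V}

lemma mem_posRoots {β : V} :
    β ∈ posRoots Φ Δ ↔ β ∈ Φ ∧ ∃ c : V → ℕ, β = ∑ α ∈ Δ, (c α : ℝ) • α := Iff.rfl

lemma coeff_unique (hli : LinearIndependent ℝ (fun a : Δ => (a : V))) (c d : V → ℝ)
    (h : ∑ a ∈ Δ, c a • a = ∑ a ∈ Δ, d a • a) : ∀ a ∈ Δ, c a = d a := by
  intro a ha
  have h0 : ∑ x ∈ Δ.attach, (c ↑x - d ↑x) • (x : V) = 0 := by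
    simp only [sub_smul, Finset.sum_sub_distrib]
    rw [Finset.sum_attach Δ (fun v => c v • v), Finset.sum_attach Δ (fun v => d v • v), h,
      sub_self]
  have h1 := linearIndependent_iff'.1 hli Finset.univ (fun x => c ↑x - d ↑x)
    (by simpa using h0) ⟨a, ha⟩ (Finset.mem_univ _)
  have : c a - d a = 0 := h1
  linarith

lemma root_nonzero (hΦ : IsIrredRootSystem Φ) {γ : V} (h : γ ∈ Φ) : γ ≠ 0 :=
  fun h0 => hΦ.nonzero (h0 ▸ h)

lemma neg_root_mem (hΦ : IsIrredRootSystem Φ) {γ : V} (h : γ ∈ Φ) : -γ ∈ Φ := by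
  have h2 := hΦ.reflect_mem γ h γ h
  have hγ : ⟪γ, γ⟫ ≠ 0 := (inner_self_pos' (root_nonzero hΦ h)).ne'
  rw [show 2 * ⟪γ, γ⟫ / ⟪γ, γ⟫ = 2 by field_simp] at h2
  rw [two_smul] at h2
  have : γ - (γ + γ) = -γ := by abel
  rwa [this] at h2

lemma not_pos_and_neg (hΦ : IsIrredRootSystem Φ) (hΔ : IsBase Φ Δ) {β : V}
    (h1 : β ∈ posRoots Φ Δ) (h2 : -β ∈ posRoots Φ Δ) : False := by
  obtain ⟨hβ, c, hc⟩ := h1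
  obtain ⟨_, d, hd⟩ := h2
  have hsum : ∑ a ∈ Δ, ((c a : ℝ) + (d a : ℝ)) • a = ∑ a ∈ Δ, (0 : ℝ) • a := by
    simp only [add_smul, Finset.sum_add_distrib, ← hc, ← hd]
    simp
  have hz := coeff_unique hΔ.2.1 _ _ hsum
  have hβ0 : β = 0 := by
    rw [hc]
    refine Finset.sum_eq_zero fun a ha => ?_
    have h3 := hz a ha
    have hca : (c a : ℝ) = 0 := by
      have : (0:ℝ) ≤ (c a : ℝ) := Nat.cast_nonneg _
      have : (0:ℝ) ≤ (d a : ℝ) := Nat.cast_nonneg _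
      linarith
    rw [hca, zero_smul]
  exact hΦ.nonzero (hβ0 ▸ hβ)

lemma root_pos_or_neg (hΦ : IsIrredRootSystem Φ) (hΔ : IsBase Φ Δ) {γ : V} (h : γ ∈ Φ) :
    γ ∈ posRoots Φ Δ ∨ -γ ∈ posRoots Φ Δ := by
  obtain ⟨c, hc, hsign⟩ := hΔ.2.2 γ h
  rcases hsign with hp | hn
  · left
    refine ⟨h, fun v => (c v).toNat, ?_⟩
    rw [hc]
    refine Finset.sum_congr rfl fun a ha => ?_
    have hcst : (((c a).toNat : ℕ) : ℝ) = ((c a : ℤ) : ℝ) := by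
      exact_mod_cast congrArg (Int.cast : ℤ → ℝ) (Int.toNat_of_nonneg (hp a ha))
    rw [hcst]
  · right
    refine ⟨neg_root_mem hΦ h, fun v => (-c v).toNat, ?_⟩
    rw [hc, ← Finset.sum_neg_distrib]
    refine Finset.sum_congr rfl fun a ha => ?_
    have h5 : (0:ℤ) ≤ -c a := by have := hn a ha; omega
    have hcst : (((-c a).toNat : ℕ) : ℝ) = ((-c a : ℤ) : ℝ) := by
      exact_mod_cast congrArg (Int.cast : ℤ → ℝ) (Int.toNat_of_nonneg h5)
    rw [hcst]
    push_cast
    rw [neg_smul]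

lemma mem_pos_of_coeff (hΦ : IsIrredRootSystem Φ) (hΔ : IsBase Φ Δ) {γ : V} (hγ : γ ∈ Φ)
    (c : V → ℝ) (hrep : γ = ∑ a ∈ Δ, c a • a) (hc : ∀ a ∈ Δ, 0 ≤ c a) :
    γ ∈ posRoots Φ Δ := by
  rcases root_pos_or_neg hΦ hΔ hγ with hp | hn
  · exact hp
  · exfalso
    obtain ⟨_, d, hd⟩ := hn
    have hsum : ∑ a ∈ Δ, (c a + (d a : ℝ)) • a = ∑ a ∈ Δ, (0 : ℝ) • a := by
      simp only [add_smul, Finset.sum_add_distrib, ← hrep, ← hd]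
      simp
    have hz := coeff_unique hΔ.2.1 _ _ hsum
    have hγ0 : γ = 0 := by
      rw [hrep]
      refine Finset.sum_eq_zero fun a ha => ?_
      have h3 := hz a ha
      have h4 : (0:ℝ) ≤ (d a : ℝ) := Nat.cast_nonneg _
      have : c a = 0 := by linarith [hc a ha]
      rw [this, zero_smul]
    exact hΦ.nonzero (hγ0 ▸ hγ)

lemma simple_mem_pos (hΦ : IsIrredRootSystem Φ) (hΔ : IsBase Φ Δ) {α : V} (hα : α ∈ Δ) :
    α ∈ posRoots Φ Δ := by
  classical
  refine ⟨hΔ.1 hα, fun v => if v = α then 1 else 0, ?_⟩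
  rw [Finset.sum_congr rfl (fun a _ => show ((if a = α then (1:ℕ) else 0 : ℕ) : ℝ) • a
      = if a = α then a else 0 by split <;> simp [*])]
  rw [Finset.sum_ite_eq' Δ α (fun a => a), if_pos hα]

end Aux2

section Aux3
variable {Φ : Set V} {Δ : Finset V}

/-- A simple reflection permutes the positive roots other than the simple root itself. -/
lemma sRefl_simple_perm (hΦ : IsIrredRootSystem Φ) (hΔ : IsBase Φ Δ) {α β : V}
    (hα : α ∈ Δ) (hβ : β ∈ posRoots Φ Δ) (hne : β ≠ α) :
    sRefl α β ∈ posRoots Φ Δ := by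
  classical
  have hαΦ : α ∈ Φ := hΔ.1 hα
  have hα0 : α ≠ 0 := root_nonzero hΦ hαΦ
  obtain ⟨hβΦ, c, hc⟩ := hβ
  set k : ℝ := 2 * ⟪α, β⟫ / ⟪α, α⟫ with hk
  have hsΦ : β - k • α ∈ Φ := hΦ.reflect_mem α hαΦ β hβΦ
  -- find b ∈ Δ, b ≠ α with c b ≠ 0
  have hb : ∃ b ∈ Δ, b ≠ α ∧ c b ≠ 0 := by
    by_contra hcon
    push_neg at hcon
    have hβα : β = (c α : ℝ) • α := by
      rw [hc]
      rw [Finset.sum_eq_single_of_mem α hα]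
      intro b hbΔ hbne
      rw [hcon b hbΔ hbne, Nat.cast_zero, zero_smul]
    have := hΦ.reduced α hαΦ (c α : ℝ) (hβα ▸ hβΦ)
    rcases this with h1 | h1
    · exact hne (by rw [hβα, h1, one_smul])
    · have : (0:ℝ) ≤ (c α : ℝ) := Nat.cast_nonneg _
      linarith [h1 ▸ this]
  obtain ⟨b, hbΔ, hbα, hcb⟩ := hb
  -- real representation of β - k•α
  have hrep : β - k • α = ∑ a ∈ Δ, ((c a : ℝ) - if a = α then k else 0) • a := by
    simp only [sub_smul]
    rw [Finset.sum_sub_distrib, ← hc]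
    congr 1
    rw [Finset.sum_congr rfl (fun a _ => show (if a = α then k else 0) • a
        = if a = α then k • α else 0 by split <;> simp [*]),
      Finset.sum_ite_eq' Δ α (fun _ => k • α), if_pos hα]
  obtain ⟨e, he, hesign⟩ := hΔ.2.2 _ hsΦ
  have heq := coeff_unique hΔ.2.1 _ _ (hrep.symm.trans he)
  have hebpos : (0:ℤ) < e b := by
    have h1 := heq b hbΔ
    rw [if_neg hbα, sub_zero] at h1
    have : (0:ℝ) < (c b : ℝ) := by exact_mod_cast Nat.pos_of_ne_zero hcb
    exact_mod_cast h1 ▸ this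
  have hsign : ∀ a ∈ Δ, 0 ≤ e a := by
    rcases hesign with h1 | h1
    · exact h1
    · exact absurd (h1 b hbΔ) (by omega)
  have : sRefl α β = β - k • α := rfl
  rw [this]
  exact mem_pos_of_coeff hΦ hΔ hsΦ (fun v => (e v : ℝ)) he
    (fun a ha => by show (0:ℝ) ≤ ((e a : ℤ) : ℝ); exact_mod_cast hsign a ha)

/-- Words in the simple reflections. -/
def IsSWord (Δ : Finset V) (L : List (V ≃ₗ[ℝ] V)) : Prop := ∀ s ∈ L, s ∈ simpleReflections Δ

lemma mem_simpleReflections {s : V ≃ₗ[ℝ] V} :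
    s ∈ simpleReflections Δ ↔ ∃ a ∈ Δ, s = sRefl a := by
  constructor
  · rintro ⟨a, ha, hfa⟩
    exact ⟨a, ha, LinearEquiv.ext hfa⟩
  · rintro ⟨a, ha, rfl⟩
    exact ⟨a, ha, fun v => rfl⟩

lemma sRefl_mem_simpleReflections {a : V} (ha : a ∈ Δ) : sRefl a ∈ simpleReflections Δ :=
  mem_simpleReflections.2 ⟨a, ha, rfl⟩

lemma word_maps_root (hΦ : IsIrredRootSystem Φ) (hΔ : IsBase Φ Δ) {L : List (V ≃ₗ[ℝ] V)}
    (hL : IsSWord Δ L) {γ : V} (hγ : γ ∈ Φ) : L.prod γ ∈ Φ := by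
  induction L with
  | nil => simpa using hγ
  | cons s L ih =>
    rw [List.prod_cons, mul_apply']
    have h2 : L.prod γ ∈ Φ := ih (fun t ht => hL t (List.mem_cons_of_mem s ht))
    obtain ⟨a, ha, rfl⟩ := mem_simpleReflections.1 (hL s (List.mem_cons_self))
    exact hΦ.reflect_mem a (hΔ.1 ha) _ h2

lemma word_inner {L : List (V ≃ₗ[ℝ] V)} (hL : IsSWord Δ L) (u v : V) :
    ⟪L.prod u, L.prod v⟫ = ⟪u, v⟫ := by
  induction L with
  | nil => simp
  | cons s L ih =>
    rw [List.prod_cons, mul_apply', mul_apply']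
    have ih2 := ih (fun t ht => hL t (List.mem_cons_of_mem s ht))
    obtain ⟨a, _, rfl⟩ := mem_simpleReflections.1 (hL s (List.mem_cons_self))
    rw [sRefl_inner]
    exact ih2

lemma conj_sRefl {L : List (V ≃ₗ[ℝ] V)} (hL : IsSWord Δ L) (γ : V) :
    L.prod * sRefl γ * (L.prod)⁻¹ = sRefl (L.prod γ) := by
  set u := L.prod with hu
  refine LinearEquiv.ext fun v => ?_
  have huv : u (u⁻¹ v) = v := by rw [← mul_apply', mul_inv_cancel, one_apply']
  have h1 : (u * sRefl γ * u⁻¹) v = u (sRefl γ (u⁻¹ v)) := rfl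
  have e1 : ⟪u γ, u γ⟫ = ⟪γ, γ⟫ := word_inner hL γ γ
  have e2 : ⟪u γ, v⟫ = ⟪γ, u⁻¹ v⟫ := by
    conv_lhs => rw [← huv]
    exact word_inner hL γ (u⁻¹ v)
  rw [h1, sRefl_apply, map_sub, map_smul, huv, sRefl_apply, e1, e2]

lemma word_reverse_prod {L : List (V ≃ₗ[ℝ] V)} (hL : IsSWord Δ L) :
    IsSWord Δ L.reverse ∧ (L.reverse).prod = (L.prod)⁻¹ := by
  induction L with
  | nil => exact ⟨fun s hs => absurd hs List.not_mem_nil, by simp⟩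
  | cons s L ih =>
    have hLw : IsSWord Δ L := fun t ht => hL t (List.mem_cons_of_mem s ht)
    have hsm := hL s (List.mem_cons_self)
    obtain ⟨hw, hp⟩ := ih hLw
    constructor
    · intro t ht
      rw [List.reverse_cons, List.mem_append] at ht
      rcases ht with ht | ht
      · exact hw t ht
      · rw [List.mem_singleton] at ht; exact ht ▸ hsm
    · rw [List.reverse_cons, List.prod_append, List.prod_singleton, hp, List.prod_cons,
        mul_inv_rev]
      congr 1
      obtain ⟨a, _, rfl⟩ := mem_simpleReflections.1 hsm
      exact (sRefl_inv a).symm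

lemma len_le {w : V ≃ₗ[ℝ] V} {L : List (V ≃ₗ[ℝ] V)} (hL : IsSWord Δ L) (hp : L.prod = w) :
    len Δ w ≤ L.length := Nat.sInf_le ⟨L, hL, rfl, hp⟩

lemma len_spec {w : V ≃ₗ[ℝ] V} (hw : ∃ L, IsSWord Δ L ∧ L.prod = w) :
    ∃ L, IsSWord Δ L ∧ L.length = len Δ w ∧ L.prod = w := by
  obtain ⟨L, hL, hp⟩ := hw
  have hne : {n | ∃ L : List (V ≃ₗ[ℝ] V),
      (∀ s ∈ L, s ∈ simpleReflections Δ) ∧ L.length = n ∧ L.prod = w}.Nonempty :=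
    ⟨L.length, L, hL, rfl, hp⟩
  exact Nat.sInf_mem hne

lemma len_inv_le {w : V ≃ₗ[ℝ] V} (hw : ∃ L, IsSWord Δ L ∧ L.prod = w) :
    len Δ w⁻¹ ≤ len Δ w := by
  obtain ⟨L, hL, hlen, hp⟩ := len_spec hw
  obtain ⟨hw', hp'⟩ := word_reverse_prod hL
  calc len Δ w⁻¹ ≤ L.reverse.length := len_le hw' (by rw [hp', hp])
  _ = len Δ w := by rw [List.length_reverse, hlen]

lemma len_inv {w : V ≃ₗ[ℝ] V} (hw : ∃ L, IsSWord Δ L ∧ L.prod = w) :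
    len Δ w⁻¹ = len Δ w := by
  refine le_antisymm (len_inv_le hw) ?_
  obtain ⟨L, hL, hp⟩ := hw
  obtain ⟨hw', hp'⟩ := word_reverse_prod hL
  have := len_inv_le (w := w⁻¹) ⟨L.reverse, hw', by rw [hp', hp]⟩
  simpa using this

end Aux3

section Aux4
variable {Φ : Set V} {Δ : Finset V}

/-- The deletion (exchange) lemma. -/
lemma deletion (hΦ : IsIrredRootSystem Φ) (hΔ : IsBase Φ Δ) {α : V} (hα : α ∈ Δ)
    {L : List (V ≃ₗ[ℝ] V)} (hL : IsSWord Δ L) (hneg : -(L.prod α) ∈ posRoots Φ Δ) :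
    ∃ L', IsSWord Δ L' ∧ L'.length + 1 = L.length ∧ L'.prod = L.prod * sRefl α := by
  induction L with
  | nil =>
    exfalso
    have h1 : (List.nil : List (V ≃ₗ[ℝ] V)).prod α = α := by simp
    rw [h1] at hneg
    exact not_pos_and_neg hΦ hΔ (simple_mem_pos hΦ hΔ hα) hneg
  | cons s L ih =>
    have hLw : IsSWord Δ L := fun t ht => hL t (List.mem_cons_of_mem s ht)
    have hsm := hL s (List.mem_cons_self)
    have hprod : (s :: L).prod α = s (L.prod α) := by rw [List.prod_cons, mul_apply']
    have huαΦ : L.prod α ∈ Φ := word_maps_root hΦ hΔ hLw (hΔ.1 hα)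
    rcases root_pos_or_neg hΦ hΔ huαΦ with hpos | hneg'
    · -- L.prod α positive: must have L.prod α = b where s = sRefl b
      obtain ⟨b, hbΔ, rfl⟩ := mem_simpleReflections.1 hsm
      by_cases heq : L.prod α = b
      · -- exchange
        refine ⟨L, hLw, by simp [List.length_cons], ?_⟩
        have hconj := conj_sRefl hLw α
        rw [heq] at hconj
        have h2 : sRefl b * L.prod = L.prod * sRefl α := by
          rw [← hconj]
          group
        rw [List.prod_cons, h2, mul_assoc, sRefl_mul_self, mul_one]
      · exfalso
        have := sRefl_simple_perm hΦ hΔ hbΔ hpos heq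
        rw [← hprod] at this
        exact not_pos_and_neg hΦ hΔ this hneg
    · obtain ⟨L', hw', hlen', hp'⟩ := ih hLw hneg'
      refine ⟨s :: L', fun t ht => ?_, by simp [List.length_cons, ← hlen'], ?_⟩
      · rcases List.mem_cons.1 ht with rfl | ht
        · exact hsm
        · exact hw' t ht
      · rw [List.prod_cons, List.prod_cons, hp', mul_assoc]

lemma sRefl_apply_self_of_mem (hΦ : IsIrredRootSystem Φ) (hΔ : IsBase Φ Δ) {α : V}
    (hα : α ∈ Δ) : sRefl α α = -α :=
  sRefl_self α (root_nonzero hΦ (hΔ.1 hα))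

/-- If `w α > 0` then `len (w * s_α) = len w + 1`. -/
lemma len_mul_sRefl_of_pos (hΦ : IsIrredRootSystem Φ) (hΔ : IsBase Φ Δ) {α : V} (hα : α ∈ Δ)
    {w : V ≃ₗ[ℝ] V} (hw : ∃ L, IsSWord Δ L ∧ L.prod = w) (hpos : w α ∈ posRoots Φ Δ) :
    len Δ (w * sRefl α) = len Δ w + 1 := by
  obtain ⟨L, hL, hlen, hp⟩ := len_spec hw
  have hword' : IsSWord Δ (L ++ [sRefl α]) := by
    intro t ht
    rcases List.mem_append.1 ht with ht | ht
    · exact hL t ht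
    · rw [List.mem_singleton] at ht
      exact ht ▸ sRefl_mem_simpleReflections hα
  have hprod' : (L ++ [sRefl α]).prod = w * sRefl α := by
    rw [List.prod_append, List.prod_singleton, hp]
  have hub : len Δ (w * sRefl α) ≤ len Δ w + 1 := by
    have := len_le hword' hprod'
    simpa [hlen] using this
  -- lower bound
  by_contra hne
  have hle : len Δ (w * sRefl α) ≤ len Δ w := by omega
  obtain ⟨M, hM, hMlen, hMp⟩ := len_spec (w := w * sRefl α) ⟨L ++ [sRefl α], hword', hprod'⟩
  have hα0 : α ≠ 0 := root_nonzero hΦ (hΔ.1 hα)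
  have hMα : -(M.prod α) ∈ posRoots Φ Δ := by
    rw [hMp, mul_apply', sRefl_apply_self_of_mem hΦ hΔ hα, map_neg, neg_neg]
    exact hpos
  obtain ⟨M', hw', hlen', hp'⟩ := deletion hΦ hΔ hα hM hMα
  have hM'w : M'.prod = w := by
    rw [hp', hMp, mul_assoc, sRefl_mul_self, mul_one]
  have := len_le hw' hM'w
  omega

/-- If `w α < 0` then `len (w * s_α) + 1 = len w`. -/
lemma len_mul_sRefl_of_neg (hΦ : IsIrredRootSystem Φ) (hΔ : IsBase Φ Δ) {α : V} (hα : α ∈ Δ)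
    {w : V ≃ₗ[ℝ] V} (hw : ∃ L, IsSWord Δ L ∧ L.prod = w) (hneg : -(w α) ∈ posRoots Φ Δ) :
    len Δ (w * sRefl α) + 1 = len Δ w := by
  obtain ⟨L, hL, hp⟩ := hw
  have hword' : IsSWord Δ (L ++ [sRefl α]) := by
    intro t ht
    rcases List.mem_append.1 ht with ht | ht
    · exact hL t ht
    · rw [List.mem_singleton] at ht
      exact ht ▸ sRefl_mem_simpleReflections hα
  have hprod' : (L ++ [sRefl α]).prod = w * sRefl α := by
    rw [List.prod_append, List.prod_singleton, hp]
  have hkey := len_mul_sRefl_of_pos hΦ hΔ hα (w := w * sRefl α) ⟨_, hword', hprod'⟩ (by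
    rw [mul_apply', sRefl_apply_self_of_mem hΦ hΔ hα, map_neg]
    exact hneg)
  rw [mul_assoc, sRefl_mul_self, mul_one] at hkey
  omega

/-- Left version: if `w⁻¹ α > 0` then `len (s_α * w) = len w + 1`. -/
lemma len_sRefl_mul_of_pos (hΦ : IsIrredRootSystem Φ) (hΔ : IsBase Φ Δ) {α : V} (hα : α ∈ Δ)
    {w : V ≃ₗ[ℝ] V} (hw : ∃ L, IsSWord Δ L ∧ L.prod = w) (hpos : w⁻¹ α ∈ posRoots Φ Δ) :
    len Δ (sRefl α * w) = len Δ w + 1 := by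
  obtain ⟨L, hL, hp⟩ := hw
  obtain ⟨hwr, hpr⟩ := word_reverse_prod hL
  have hwinv : ∃ M, IsSWord Δ M ∧ M.prod = w⁻¹ := ⟨L.reverse, hwr, by rw [hpr, hp]⟩
  have h1 : len Δ (w⁻¹ * sRefl α) = len Δ w⁻¹ + 1 := len_mul_sRefl_of_pos hΦ hΔ hα hwinv hpos
  have h2 : (w⁻¹ * sRefl α)⁻¹ = sRefl α * w := by rw [mul_inv_rev, inv_inv, sRefl_inv]
  have hwinvsα : ∃ M, IsSWord Δ M ∧ M.prod = w⁻¹ * sRefl α := by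
    obtain ⟨M, hM, hMp⟩ := hwinv
    refine ⟨M ++ [sRefl α], ?_, by rw [List.prod_append, List.prod_singleton, hMp]⟩
    intro t ht
    rcases List.mem_append.1 ht with ht | ht
    · exact hM t ht
    · rw [List.mem_singleton] at ht
      exact ht ▸ sRefl_mem_simpleReflections hα
  calc len Δ (sRefl α * w) = len Δ (w⁻¹ * sRefl α)⁻¹ := by rw [h2]
  _ = len Δ (w⁻¹ * sRefl α) := len_inv hwinvsα
  _ = len Δ w⁻¹ + 1 := h1
  _ = len Δ w + 1 := by rw [len_inv ⟨L, hL, hp⟩]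

end Aux4

section Aux5
variable {Φ : Set V} {Δ : Finset V}

lemma f_simple (hΦ : IsIrredRootSystem Φ) (hΔ : IsBase Φ Δ) (f : V →ₗ[ℝ] ℝ)
    (hf : ∀ a ∈ Δ, f (coroot a) = 1) {a : V} (ha : a ∈ Δ) : f a = ⟪a, a⟫ / 2 := by
  have h0 : (0:ℝ) < ⟪a, a⟫ := inner_self_pos' (root_nonzero hΦ (hΔ.1 ha))
  have h1 := hf a ha
  rw [coroot, map_smul, smul_eq_mul] at h1
  field_simp at h1 ⊢
  linarith

lemma main_induction (hΦ : IsIrredRootSystem Φ) (hΔ : IsBase Φ Δ)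
    (r : ℝ) (hr : IsGreatest {x : ℝ | ∃ α ∈ Φ, x = ⟪α, α⟫} r)
    (f : V →ₗ[ℝ] ℝ) (hf : ∀ a ∈ Δ, f (coroot a) = 1) (n : ℕ) :
    ∀ β : V, β ∈ posRoots Φ Δ → ⟪β, β⟫ = r → ∀ c : V → ℕ,
      β = ∑ a ∈ Δ, (c a : ℝ) • a → (∑ a ∈ Δ, c a) = n →
      (∃ L, IsSWord Δ L ∧ L.prod = sRefl β) ∧
        (len Δ (sRefl β) : ℝ) = 2 * f (coroot β) - 1 := by
  induction n using Nat.strong_induction_on with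
  | _ n IH =>
  intro β hβ hβr c hc hcn
  classical
  have hβΦ : β ∈ Φ := hβ.1
  have hβ0 : β ≠ 0 := root_nonzero hΦ hβΦ
  have rpos : (0:ℝ) < r := hβr ▸ inner_self_pos' hβ0
  by_cases hβΔ : β ∈ Δ
  · -- base case : β is simple
    have hword : IsSWord Δ [sRefl β] := by
      intro t ht
      rw [List.mem_singleton] at ht
      exact ht ▸ sRefl_mem_simpleReflections hβΔ
    have hprod : ([sRefl β]).prod = sRefl β := List.prod_singleton
    refine ⟨⟨[sRefl β], hword, hprod⟩, ?_⟩
    have hub : len Δ (sRefl β) ≤ 1 := by simpa using len_le hword hprod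
    have hne : len Δ (sRefl β) ≠ 0 := by
      intro h0
      obtain ⟨L, hL, hlen, hp⟩ := len_spec (w := sRefl β) ⟨[sRefl β], hword, hprod⟩
      rw [h0] at hlen
      have : L = [] := List.length_eq_zero_iff.1 hlen
      rw [this] at hp
      have h1 : sRefl β β = β := by rw [← hp]; simp
      rw [sRefl_self β hβ0] at h1
      have h2 : (2:ℝ) • β = 0 := by
        rw [two_smul]
        nth_rewrite 1 [← h1]
        abel
      rcases smul_eq_zero.1 h2 with h3 | h3
      · norm_num at h3
      · exact hβ0 h3
    have hlen1 : len Δ (sRefl β) = 1 := by omega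
    rw [hlen1, hf β hβΔ]
    norm_num
  · -- inductive step
    have hex : ∃ a ∈ Δ, 0 < ⟪a, β⟫ := by
      by_contra hcon
      push_neg at hcon
      have hle : ⟪β, β⟫ ≤ 0 := by
        nth_rewrite 1 [hc]
        rw [sum_inner]
        refine Finset.sum_nonpos fun a ha => ?_
        rw [real_inner_smul_left]
        exact mul_nonpos_of_nonneg_of_nonpos (Nat.cast_nonneg _) (hcon a ha)
      rw [hβr] at hle
      linarith
    obtain ⟨α, hαΔ, hip⟩ := hex
    have hβα : β ≠ α := fun h => hβΔ (h ▸ hαΔ)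
    have hαΦ : α ∈ Φ := hΔ.1 hαΔ
    have hα0 : α ≠ 0 := root_nonzero hΦ hαΦ
    have hαip : (0:ℝ) < ⟪α, α⟫ := inner_self_pos' hα0
    obtain ⟨m, hm⟩ := hΦ.crystallographic α hαΦ β hβΦ
    obtain ⟨nn, hn⟩ := hΦ.crystallographic β hβΦ α hαΦ
    have hma : (m:ℝ) * ⟪α, α⟫ = 2 * ⟪α, β⟫ := by
      rw [← hm]; field_simp
    have hβip : ⟪β, β⟫ ≠ 0 := (inner_self_pos' hβ0).ne'
    have hnb : (nn:ℝ) * ⟪β, β⟫ = 2 * ⟪α, β⟫ := by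
      rw [← hn, real_inner_comm β α, div_mul_cancel₀ _ hβip]
    have hmpos : (0:ℤ) < m := by
      have : (0:ℝ) < (m:ℝ) := by nlinarith
      exact_mod_cast this
    have hnpos : (0:ℤ) < nn := by
      have : (0:ℝ) < (nn:ℝ) := by nlinarith [inner_self_pos' hβ0]
      exact_mod_cast this
    have hαler : ⟪α, α⟫ ≤ r := hr.2 ⟨α, hαΦ, rfl⟩
    have hmr : (0:ℝ) < (m:ℝ) := by exact_mod_cast hmpos
    have hnlem : nn ≤ m := by
      have h1 : (nn:ℝ) * r ≤ (m:ℝ) * r := by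
        rw [← hβr, hnb, ← hma]
        refine mul_le_mul_of_nonneg_left ?_ hmr.le
        rw [hβr]
        exact hαler
      have h2 : (nn:ℝ) ≤ (m:ℝ) := (mul_le_mul_iff_of_pos_right rpos).1 h1
      exact_mod_cast h2
    have hcs := real_inner_mul_inner_self_le α β
    have hnm4 : nn * m ≤ 4 := by
      have hABpos : (0:ℝ) < ⟪α,α⟫ * ⟪β,β⟫ := mul_pos hαip (inner_self_pos' hβ0)
      have h4 : (nn:ℝ) * (m:ℝ) * (⟪α,α⟫ * ⟪β,β⟫) = (2*⟪α,β⟫) * (2*⟪α,β⟫) := by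
        linear_combination ((nn:ℝ) * ⟪β,β⟫) * hma + (2 * ⟪α,β⟫) * hnb
      have : (nn:ℝ) * (m:ℝ) ≤ 4 := by nlinarith
      exact_mod_cast this
    have hnn1 : nn = 1 := by
      by_contra hne1
      have h2le : 2 ≤ nn := by omega
      have h3 : nn * nn ≤ nn * m := mul_le_mul_of_nonneg_left hnlem (by omega)
      have hn2 : nn = 2 := by nlinarith
      have hm2 : m = 2 := by
        rw [hn2] at hnm4 hnlem
        omega
      have e1 : (nn:ℝ) = 2 := by exact_mod_cast hn2
      have e2 : (m:ℝ) = 2 := by exact_mod_cast hm2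
      rw [e1] at hnb
      rw [e2] at hma
      have h1 : ⟪α, α⟫ = ⟪β, β⟫ := by linarith
      have h2' : ⟪α, β⟫ = ⟪β, β⟫ := by linarith
      have h3' : ⟪β - α, β - α⟫ = 0 := by
        have hexp2 : ⟪β - α, β - α⟫ = ⟪β,β⟫ - 2*⟪α,β⟫ + ⟪α,α⟫ := by
          rw [inner_sub_left, inner_sub_right, inner_sub_right, real_inner_comm β α]
          ring
        rw [hexp2]
        linarith
      exact hβα (sub_eq_zero.1 (inner_self_eq_zero.1 h3'))
    have h2ab : 2 * ⟪α, β⟫ = r := by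
      rw [← hnb, hnn1, ← hβr]; norm_num
    -- the reflected root γ
    set γ : V := β - (2 * ⟪α, β⟫ / ⟪α, α⟫) • α with hγdef
    have hγs : sRefl α β = γ := rfl
    have hγk : γ = β - (m:ℝ) • α := by rw [hγdef, hm]
    have hγpos : γ ∈ posRoots Φ Δ := hγs ▸ sRefl_simple_perm hΦ hΔ hαΔ hβ hβα
    have hγΦ : γ ∈ Φ := hγpos.1
    have hγ0 : γ ≠ 0 := root_nonzero hΦ hγΦ
    have hγexp : ⟪γ, γ⟫ = ⟪β,β⟫ - 2*(m:ℝ)*⟪α,β⟫ + (m:ℝ)^2*⟪α,α⟫ := by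
      rw [hγk, inner_sub_left, inner_sub_right, inner_sub_right, real_inner_smul_left,
        real_inner_smul_left, real_inner_smul_right, real_inner_smul_right,
        real_inner_comm β α]
      ring
    have hγr : ⟪γ, γ⟫ = r := by
      rw [hγexp, hβr]; linear_combination (m:ℝ) * hma
    have hγα : ⟪γ, α⟫ = -⟪α, β⟫ := by
      rw [hγk, inner_sub_left, real_inner_smul_left]
      have hba : ⟪β, α⟫ = ⟪α, β⟫ := (real_inner_comm β α).symm
      linarith [hma, hba]
    -- coefficients of γ
    obtain ⟨-, d, hd⟩ := id hγpos
    have hm1 : (1:ℝ) ≤ (m:ℝ) := by exact_mod_cast hmpos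
    have hrepγ : γ = ∑ a ∈ Δ, ((c a : ℝ) - if a = α then (m:ℝ) else 0) • a := by
      simp only [sub_smul]
      rw [Finset.sum_sub_distrib, ← hc]
      rw [hγk]
      congr 1
      rw [Finset.sum_congr rfl (fun a _ => show (if a = α then (m:ℝ) else 0) • a
          = if a = α then (m:ℝ) • α else 0 by split <;> simp [*]),
        Finset.sum_ite_eq' Δ α (fun _ => (m:ℝ) • α), if_pos hαΔ]
    have hdc := coeff_unique hΔ.2.1 _ _ (hd.symm.trans hrepγ)
    have hsum : ((∑ a ∈ Δ, d a : ℕ) : ℝ) = ((∑ a ∈ Δ, c a : ℕ) : ℝ) - (m:ℝ) := by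
      push_cast
      rw [Finset.sum_congr rfl hdc, Finset.sum_sub_distrib,
        Finset.sum_ite_eq' Δ α (fun _ => (m:ℝ)), if_pos hαΔ]
    have hsumlt : (∑ a ∈ Δ, d a) < n := by
      have h1 : ((∑ a ∈ Δ, d a : ℕ) : ℝ) < ((n : ℕ) : ℝ) := by
        rw [hsum, ← hcn]
        linarith
      exact_mod_cast h1
    -- apply the induction hypothesis to γ
    obtain ⟨⟨Lγ, hLγw, hLγp⟩, hlenγ⟩ := IH (∑ a ∈ Δ, d a) hsumlt γ hγpos hγr d hd rfl
    -- s_γ α = α + γ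
    have hsγα : sRefl γ α = α + γ := by
      rw [sRefl_apply]
      have hco : 2 * ⟪γ, α⟫ / ⟪γ, γ⟫ = -1 := by
        rw [hγα, hγr, div_eq_iff rpos.ne']
        linarith
      rw [hco, neg_one_smul]
      abel
    have hαγΦ : α + γ ∈ Φ := by
      have h1 := hΦ.reflect_mem γ hγΦ α hαΦ
      rw [show α - (2 * ⟪γ, α⟫ / ⟪γ, γ⟫) • γ = sRefl γ α from rfl, hsγα] at h1
      exact h1
    have hαγpos : α + γ ∈ posRoots Φ Δ := by
      refine mem_pos_of_coeff hΦ hΔ hαγΦ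
        (fun a => (if a = α then (1:ℝ) else 0) + (d a : ℝ)) ?_ ?_
      · simp only [add_smul]
        rw [Finset.sum_add_distrib, ← hd]
        congr 1
        rw [Finset.sum_congr rfl (fun a _ => show (if a = α then (1:ℝ) else 0) • a
            = if a = α then α else 0 by split <;> simp [*]),
          Finset.sum_ite_eq' Δ α (fun a => α), if_pos hαΔ]
      · intro a _
        have h0 : (0:ℝ) ≤ (d a : ℝ) := Nat.cast_nonneg _
        show (0:ℝ) ≤ (if a = α then (1:ℝ) else 0) + (d a : ℝ)
        split <;> linarith
    -- words
    have hwordγα : IsSWord Δ (Lγ ++ [sRefl α]) := by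
      intro t ht
      rcases List.mem_append.1 ht with ht | ht
      · exact hLγw t ht
      · rw [List.mem_singleton] at ht
        exact ht ▸ sRefl_mem_simpleReflections hαΔ
    have hprodγα : (Lγ ++ [sRefl α]).prod = sRefl γ * sRefl α := by
      rw [List.prod_append, List.prod_singleton, hLγp]
    -- Step B : len (s_γ s_α) = len s_γ + 1
    have lenB : len Δ (sRefl γ * sRefl α) = len Δ (sRefl γ) + 1 :=
      len_mul_sRefl_of_pos hΦ hΔ hαΔ ⟨Lγ, hLγw, hLγp⟩ (by rw [hsγα]; exact hαγpos)
    -- β - α is a positive root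
    have hsαγ : sRefl α γ = β := by rw [← hγs, sRefl_sRefl]
    have hval : (sRefl α * sRefl γ) α = β - α := by
      rw [mul_apply', hsγα, map_add, sRefl_apply_self_of_mem hΦ hΔ hαΔ, hsαγ]
      abel
    have hβαΦ : β - α ∈ Φ := by
      rw [← hval, mul_apply']
      exact hΦ.reflect_mem α hαΦ _ (hΦ.reflect_mem γ hγΦ α hαΦ)
    have hβαrep : β - α = ∑ a ∈ Δ, ((d a : ℝ) + (if a = α then (m:ℝ) - 1 else 0)) • a := by
      simp only [add_smul]
      rw [Finset.sum_add_distrib, ← hd]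
      rw [Finset.sum_congr rfl (fun a _ => show (if a = α then (m:ℝ) - 1 else 0) • a
          = if a = α then ((m:ℝ) - 1) • α else 0 by split <;> simp [*]),
        Finset.sum_ite_eq' Δ α (fun _ => ((m:ℝ) - 1) • α), if_pos hαΔ, hγk, sub_smul,
        one_smul]
      abel
    have hβαpos : β - α ∈ posRoots Φ Δ := by
      refine mem_pos_of_coeff hΦ hΔ hβαΦ _ hβαrep ?_
      intro a _
      have h0 : (0:ℝ) ≤ (d a : ℝ) := Nat.cast_nonneg _
      show (0:ℝ) ≤ (d a : ℝ) + (if a = α then (m:ℝ) - 1 else 0)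
      split <;> linarith
    -- Step C : len (s_α s_γ s_α) = len (s_γ s_α) + 1
    have lenC : len Δ (sRefl α * (sRefl γ * sRefl α)) = len Δ (sRefl γ * sRefl α) + 1 := by
      refine len_sRefl_mul_of_pos hΦ hΔ hαΔ ⟨Lγ ++ [sRefl α], hwordγα, hprodγα⟩ ?_
      rw [show (sRefl γ * sRefl α)⁻¹ = sRefl α * sRefl γ by
        rw [mul_inv_rev, sRefl_inv, sRefl_inv], hval]
      exact hβαpos
    -- Step D : s_α s_γ s_α = s_β
    have hconj : sRefl α * sRefl γ * (sRefl α)⁻¹ = sRefl (sRefl α γ) := by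
      have hw1 : IsSWord Δ [sRefl α] := by
        intro t ht
        rw [List.mem_singleton] at ht
        exact ht ▸ sRefl_mem_simpleReflections hαΔ
      have := conj_sRefl hw1 γ
      rwa [List.prod_singleton] at this
    have hDs : sRefl α * (sRefl γ * sRefl α) = sRefl β := by
      rw [← hsαγ, ← hconj, sRefl_inv, mul_assoc]
    -- combine lengths
    have hlenβ : len Δ (sRefl β) = len Δ (sRefl γ) + 2 := by
      rw [← hDs, lenC, lenB]
    -- word for s_β
    have hwordβ : IsSWord Δ (sRefl α :: (Lγ ++ [sRefl α])) := by
      intro t ht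
      rcases List.mem_cons.1 ht with rfl | ht
      · exact sRefl_mem_simpleReflections hαΔ
      · exact hwordγα t ht
    have hprodβ : (sRefl α :: (Lγ ++ [sRefl α])).prod = sRefl β := by
      rw [List.prod_cons, hprodγα, hDs]
    refine ⟨⟨_, hwordβ, hprodβ⟩, ?_⟩
    -- heights of coroots
    have hfγ : f γ = f β - (m:ℝ) * f α := by
      rw [hγk, map_sub, map_smul, smul_eq_mul]
    have hfα : f α = ⟪α, α⟫ / 2 := f_simple hΦ hΔ f hf hαΔ
    have hcor : f (coroot β) = f (coroot γ) + 1 := by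
      have hβc : coroot β = (2/r) • β := by rw [coroot, hβr]
      have hγc : coroot γ = (2/r) • γ := by rw [coroot, hγr]
      rw [hβc, hγc, map_smul, map_smul, smul_eq_mul, smul_eq_mul, hfγ, hfα]
      have hr0 : r ≠ 0 := rpos.ne'
      have hkey1 : (2:ℝ)/r * ((m:ℝ) * (⟪α, α⟫/2)) = 1 := by
        rw [show (2:ℝ)/r * ((m:ℝ) * (⟪α, α⟫/2)) = ((m:ℝ) * ⟪α, α⟫)/r by ring]
        rw [show (m:ℝ) * ⟪α, α⟫ = r by linarith [hma, h2ab]]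
        exact div_self hr0
      linear_combination hkey1
    rw [hlenβ]
    push_cast
    rw [hlenγ, hcor]
    ring

end Aux5

/-- For a positive long root `β`, the reflection `s_β` has length
`l(s_β) = 2·ht^∨(β) − 1`, where `ht^∨ = f ∘ coroot` is the height of the coroot (`f`
being the linear functional taking the value `1` on each simple coroot). -/
theorem length_reflection_long (Φ : Set V) (hΦ : IsIrredRootSystem Φ)
    (Δ : Finset V) (hΔ : IsBase Φ Δ)
    (r : ℝ) (hr : IsGreatest {x : ℝ | ∃ α ∈ Φ, x = ⟪α, α⟫} r)
    (f : V →ₗ[ℝ] ℝ) (hf : ∀ a ∈ Δ, f (coroot a) = 1)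
    (β : V) (hβ : β ∈ posRoots Φ Δ) (hβlg : ⟪β, β⟫ = r)
    (s : V ≃ₗ[ℝ] V) (hs : ∀ v, s v = v - (2 * ⟪β, v⟫ / ⟪β, β⟫) • β) :
    (len Δ s : ℝ) = 2 * f (coroot β) - 1 := by
  obtain ⟨hβΦ, c, hc⟩ := id hβ
  have hseq : s = sRefl β := LinearEquiv.ext fun v => by rw [hs v]; rfl
  rw [hseq]
  exact (main_induction hΦ hΔ r hr f hf (∑ a ∈ Δ, c a) β hβ hβlg c hc rfl).2
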